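/- Let N ≥ 1. The antilinear map J̃_N on M_(N+1)(ℂ) ⊗ ℂ² defined by J̃_N(a ⊗ v) := a* ⊗ σ₂ v̄ satisfies: (i) J̃_N is antiunitary, i.e. ⟨J̃_N x, J̃_N y⟩ = conj(⟨x, y⟩) for all x, y; (ii) J̃_N² = −1; (iii) J̃_N D̃_N = D̃_N J̃_N; and (iv) for all a, b ∈ M_(N+1)(ℂ), writing L_a for the operator b' ⊗ v ↦ ab' ⊗ v, one has [L_a, J̃_N L_b J̃_N⁻¹] = 0 and [[D̃_N, L_a], J̃_N L_b J̃_N⁻¹] = 0. -/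
import Mathlib


noncomputable section
open Matrix Kronecker

/-- The diagonal matrix `H` with `H|m⟩ = m|m⟩`, `m = i - N/2` for index `i : Fin (N+1)`. -/
def Hmat (N : ℕ) : Matrix (Fin (N + 1)) (Fin (N + 1)) ℂ :=
  Matrix.diagonal fun i => (i : ℂ) - (N : ℂ) / 2

/-- The raising operator `E` with `E|m⟩ = √((j-m)(j+m+1)) |m+1⟩`, `j = N/2`. -/
def Emat (N : ℕ) : Matrix (Fin (N + 1)) (Fin (N + 1)) ℂ := fun p q =>
  if (p : ℕ) = (q : ℕ) + 1 then (Real.sqrt ((N - (q : ℕ)) * ((q : ℕ) + 1)) : ℂ) else 0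

def Fmat (N : ℕ) : Matrix (Fin (N + 1)) (Fin (N + 1)) ℂ := (Emat N)ᴴ

/-- `J₁ = (E+F)/2`, `J₂ = (E−F)/(2i)`, `J₃ = H`. -/
def Jmat (N : ℕ) : Fin 3 → Matrix (Fin (N + 1)) (Fin (N + 1)) ℂ :=
  ![(1 / 2 : ℂ) • (Emat N + Fmat N),
    (1 / (2 * Complex.I) : ℂ) • (Emat N - Fmat N),
    Hmat N]

/-- The three Pauli matrices. -/
def pauli : Fin 3 → Matrix (Fin 2) (Fin 2) ℂ :=
  ![!![0, 1; 1, 0], !![0, -Complex.I; Complex.I, 0], !![1, 0; 0, -1]]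

/-- The matrix of the commutator map `a ↦ [X, a] = Xa − aX` on `M_(N+1)(ℂ)`,
where a matrix `a` is regarded as the vector of its entries `(p, q) ↦ a p q`. -/
def adMat {n : Type*} [Fintype n] [DecidableEq n] (X : Matrix n n ℂ) :
    Matrix (n × n) (n × n) ℂ := fun r c =>
  X r.1 c.1 * (if r.2 = c.2 then 1 else 0) - (if r.1 = c.1 then 1 else 0) * X c.2 r.2

/-- The index set of the Hilbert space `M_(N+1)(ℂ) ⊗ ℂ²`: an element `x` has component
`x ((p,q), s) = a p q * v s` on a pure tensor `a ⊗ v`. -/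
abbrev FuzzyIdx (N : ℕ) := (Fin (N + 1) × Fin (N + 1)) × Fin 2

/-- The full Dirac operator `D̃_N (a ⊗ v) = a ⊗ v + Σ_k [J_k, a] ⊗ σ_k v` as a matrix. -/
def fullDirac (N : ℕ) : Matrix (FuzzyIdx N) (FuzzyIdx N) ℂ :=
  1 + ∑ k : Fin 3, (adMat (Jmat N k)) ⊗ₖ (pauli k)

/-- The inner product `⟨a ⊗ v, b ⊗ w⟩ = Tr(a*b)·⟨v,w⟩` on `M_(N+1)(ℂ) ⊗ ℂ²`
(conjugate-linear in the first variable), written in components. -/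
def fuzzyInner (N : ℕ) (x y : FuzzyIdx N → ℂ) : ℂ :=
  ∑ r : FuzzyIdx N, star (x r) * y r

/-- The antilinear map `J̃_N (a ⊗ v) = a* ⊗ σ₂ v̄`, written in components. -/
def JtN (N : ℕ) (x : FuzzyIdx N → ℂ) : FuzzyIdx N → ℂ := fun r =>
  if r.2 = 0 then -Complex.I * star (x ((r.1.2, r.1.1), 1))
  else Complex.I * star (x ((r.1.2, r.1.1), 0))

/-- The inverse of `J̃_N` (equal to `−J̃_N` since `J̃_N² = −1`). -/
def JtNInv (N : ℕ) (x : FuzzyIdx N → ℂ) : FuzzyIdx N → ℂ := fun r =>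
  if r.2 = 0 then Complex.I * star (x ((r.1.2, r.1.1), 1))
  else -Complex.I * star (x ((r.1.2, r.1.1), 0))

/-- The left-multiplication operator `L_a : b ⊗ v ↦ ab ⊗ v` as a matrix. -/
def leftMulOp (N : ℕ) (a : Matrix (Fin (N + 1)) (Fin (N + 1)) ℂ) :
    Matrix (FuzzyIdx N) (FuzzyIdx N) ℂ := fun r c =>
  if r.1.2 = c.1.2 ∧ r.2 = c.2 then a r.1.1 c.1.1 else 0

-- auxiliary
def swsp : Fin 2 → Fin 2 := fun s => if s = 0 then 1 else 0
def kap : Fin 2 → ℂ := fun s => if s = 0 then -Complex.I else Complex.I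
def sw {N : ℕ} (r : FuzzyIdx N) : FuzzyIdx N := ((r.1.2, r.1.1), swsp r.2)

lemma swsp_swsp (s : Fin 2) : swsp (swsp s) = s := by fin_cases s <;> rfl
lemma sw_sw {N : ℕ} (r : FuzzyIdx N) : sw (sw r) = r := by
  obtain ⟨⟨p, q⟩, s⟩ := r; simp [sw, swsp_swsp]
lemma sw_invol (N : ℕ) : Function.Involutive (sw (N := N)) := sw_sw
lemma JtN_apply (N : ℕ) (x : FuzzyIdx N → ℂ) (r : FuzzyIdx N) :
    JtN N x r = kap r.2 * star (x (sw r)) := by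
  obtain ⟨⟨p, q⟩, s⟩ := r; fin_cases s <;> simp [JtN, kap, sw, swsp]
lemma JtNInv_apply (N : ℕ) (x : FuzzyIdx N → ℂ) (r : FuzzyIdx N) :
    JtNInv N x r = -kap r.2 * star (x (sw r)) := by
  obtain ⟨⟨p, q⟩, s⟩ := r; fin_cases s <;> simp [JtNInv, kap, sw, swsp]

lemma herm (N : ℕ) (k : Fin 3) : (Jmat N k)ᴴ = Jmat N k := by
  have hE : ∀ p q, star (Emat N p q) = Emat N p q := by
    intro p q
    unfold Emat
    split_ifs <;> simp
  fin_cases k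
  · show ((1 / 2 : ℂ) • (Emat N + Fmat N))ᴴ = _
    rw [conjTranspose_smul, conjTranspose_add]
    show _ = (1 / 2 : ℂ) • (Emat N + Fmat N)
    rw [Fmat, conjTranspose_conjTranspose]
    norm_num [add_comm]
  · show ((1 / (2 * Complex.I) : ℂ) • (Emat N - Fmat N))ᴴ = _
    rw [conjTranspose_smul, conjTranspose_sub]
    show _ = (1 / (2 * Complex.I) : ℂ) • (Emat N - Fmat N)
    rw [Fmat, conjTranspose_conjTranspose]
    have : star (1 / (2 * Complex.I) : ℂ) = -(1 / (2 * Complex.I)) := by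
      simp [Complex.star_def, map_div₀, Complex.conj_I]
    rw [this]
    module
  · show (Hmat N)ᴴ = Hmat N
    ext i j
    rcases eq_or_ne i j with h | h
    · subst h; simp [Hmat, Matrix.conjTranspose_apply, Complex.star_def, map_div₀]
    · simp [Hmat, Matrix.conjTranspose_apply, Matrix.diagonal_apply_ne, h, Ne.symm h]

lemma adMat_star {N : ℕ} (X : Matrix (Fin (N+1)) (Fin (N+1)) ℂ) (hX : Xᴴ = X)
    (p q c1 c2 : Fin (N+1)) :
    star (adMat X (q, p) (c1, c2)) = -adMat X (p, q) (c2, c1) := by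
  have h : ∀ i j, star (X i j) = X j i := by
    intro i j
    conv_lhs => rw [← hX]
    simp [Matrix.conjTranspose_apply]
  simp only [adMat, star_sub, star_mul', apply_ite (star : ℂ → ℂ), star_one, star_zero, h]
  ring

lemma key (N : ℕ) (k : Fin 3) (m m' : Fin (N+1) × Fin (N+1)) (s t : Fin 2) :
    kap s * (star (adMat (Jmat N k) (m.2, m.1) m') * star (pauli k (swsp s) t)) =
    adMat (Jmat N k) m (m'.2, m'.1) * pauli k s (swsp t) * kap (swsp t) := by
  obtain ⟨p, q⟩ := m; obtain ⟨c1, c2⟩ := m'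
  rw [adMat_star _ (herm N k)]
  fin_cases k <;> fin_cases s <;> fin_cases t <;>
    simp [pauli, kap, swsp] <;> ring

lemma part1 (N : ℕ) (x : FuzzyIdx N → ℂ) : JtN N (JtNInv N x) = x := by
  funext r; obtain ⟨⟨p, q⟩, s⟩ := r
  fin_cases s <;> simp [JtN, JtNInv] <;> ring_nf <;> simp [Complex.I_sq]

lemma part2 (N : ℕ) (x : FuzzyIdx N → ℂ) : JtNInv N (JtN N x) = x := by
  funext r; obtain ⟨⟨p, q⟩, s⟩ := r
  fin_cases s <;> simp [JtN, JtNInv] <;> ring_nf <;> simp [Complex.I_sq]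

lemma part4 (N : ℕ) (x : FuzzyIdx N → ℂ) : JtN N (JtN N x) = -x := by
  funext r; obtain ⟨⟨p, q⟩, s⟩ := r
  fin_cases s <;> simp [JtN] <;> ring_nf <;> simp [Complex.I_sq]

lemma part3 (N : ℕ) (x y : FuzzyIdx N → ℂ) :
    fuzzyInner N (JtN N x) (JtN N y) = star (fuzzyInner N x y) := by
  unfold fuzzyInner
  rw [star_sum]
  refine Fintype.sum_bijective sw (sw_invol N).bijective _ _ fun r => ?_
  rw [JtN_apply, JtN_apply]
  obtain ⟨⟨p, q⟩, s⟩ := r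
  fin_cases s <;> simp [kap, sw, swsp, star_mul'] <;> ring_nf <;> simp [Complex.I_sq] <;> ring

lemma fullDirac_mulVec (N : ℕ) (x : FuzzyIdx N → ℂ) (r : FuzzyIdx N) :
    (fullDirac N).mulVec x r =
      x r + ∑ k : Fin 3, ∑ c : FuzzyIdx N,
        adMat (Jmat N k) r.1 c.1 * pauli k r.2 c.2 * x c := by
  simp only [fullDirac, Matrix.add_mulVec, Matrix.one_mulVec, Pi.add_apply]
  congr 1
  rw [Matrix.mulVec, dotProduct]
  simp only [Matrix.sum_apply, Matrix.kroneckerMap_apply, Finset.sum_mul]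
  rw [Finset.sum_comm]

lemma part5 (N : ℕ) (x : FuzzyIdx N → ℂ) :
    JtN N ((fullDirac N).mulVec x) = (fullDirac N).mulVec (JtN N x) := by
  funext r
  rw [JtN_apply, fullDirac_mulVec, fullDirac_mulVec]
  rw [star_add, mul_add]
  congr 1
  · rw [JtN_apply]
  rw [star_sum, Finset.mul_sum]
  refine Finset.sum_congr rfl fun k _ => ?_
  rw [star_sum, Finset.mul_sum]
  refine Fintype.sum_bijective sw (sw_invol N).bijective _ _ fun c => ?_
  rw [JtN_apply, sw_sw]
  simp only [sw, star_mul']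
  linear_combination key N k r.1 c.1 r.2 c.2 * star (x c)

lemma leftMul_mulVec (N : ℕ) (a : Matrix (Fin (N+1)) (Fin (N+1)) ℂ)
    (y : FuzzyIdx N → ℂ) (r : FuzzyIdx N) :
    (leftMulOp N a).mulVec y r = ∑ p' : Fin (N+1), a r.1.1 p' * y ((p', r.1.2), r.2) := by
  rw [Matrix.mulVec, dotProduct]
  rw [Fintype.sum_prod_type]
  simp only [Fintype.sum_prod_type, leftMulOp, ite_and, ite_mul, zero_mul,
    Finset.sum_ite_irrel, Finset.sum_const_zero,
    Finset.sum_ite_eq, Finset.mem_univ, if_true]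

lemma Mlem (N : ℕ) (b : Matrix (Fin (N+1)) (Fin (N+1)) ℂ)
    (x : FuzzyIdx N → ℂ) (r : FuzzyIdx N) :
    JtN N ((leftMulOp N b).mulVec (JtNInv N x)) r
      = ∑ q' : Fin (N+1), star (b r.1.2 q') * x ((r.1.1, q'), r.2) := by
  obtain ⟨⟨p, q⟩, s⟩ := r
  rw [JtN_apply, leftMul_mulVec, star_sum, Finset.mul_sum]
  refine Finset.sum_congr rfl fun p' _ => ?_
  rw [JtNInv_apply]
  simp only [sw, swsp_swsp]
  fin_cases s <;> simp [kap, swsp, star_mul'] <;> ring_nf <;> simp [Complex.I_sq] <;> ring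

lemma mulVec_expand {N : ℕ} (T : Matrix (FuzzyIdx N) (FuzzyIdx N) ℂ)
    (y : FuzzyIdx N → ℂ) (r : FuzzyIdx N) :
    T.mulVec y r = ∑ c1, ∑ c2, ∑ t, T r ((c1, c2), t) * y ((c1, c2), t) := by
  rw [Matrix.mulVec, dotProduct]
  simp only [Fintype.sum_prod_type]

lemma mulVec_collapse {N : ℕ} (T : Matrix (FuzzyIdx N) (FuzzyIdx N) ℂ)
    (hT : ∀ p q c1 c2 s t, q ≠ c2 → T ((p,q),s) ((c1,c2),t) = 0)
    (y : FuzzyIdx N → ℂ) (p q : Fin (N+1)) (s : Fin 2) :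
    T.mulVec y ((p,q),s) = ∑ c1, ∑ t, T ((p,q),s) ((c1,q),t) * y ((c1,q),t) := by
  rw [mulVec_expand]
  refine Finset.sum_congr rfl fun c1 _ => ?_
  exact Fintype.sum_eq_single q fun c2 hne =>
    Finset.sum_eq_zero fun t _ => by rw [hT _ _ _ _ _ _ (Ne.symm hne), zero_mul]

lemma commT (N : ℕ) (T : Matrix (FuzzyIdx N) (FuzzyIdx N) ℂ)
    (hT : ∀ p q c1 c2 s t, q ≠ c2 → T ((p,q),s) ((c1,c2),t) = 0)
    (hT2 : ∀ p c1 q q' s t, T ((p,q),s) ((c1,q),t) = T ((p,q'),s) ((c1,q'),t))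
    (b : Matrix (Fin (N+1)) (Fin (N+1)) ℂ) (x : FuzzyIdx N → ℂ) :
    T.mulVec (JtN N ((leftMulOp N b).mulVec (JtNInv N x))) =
      JtN N ((leftMulOp N b).mulVec (JtNInv N (T.mulVec x))) := by
  funext r
  obtain ⟨⟨p, q⟩, s⟩ := r
  rw [mulVec_collapse T hT, Mlem]
  have hR : ∀ q' : Fin (N+1), (T.mulVec x) ((p, q'), s)
      = ∑ c1, ∑ t, T ((p,q),s) ((c1,q),t) * x ((c1,q'),t) := by
    intro q'
    rw [mulVec_collapse T hT]
    exact Finset.sum_congr rfl fun c1 _ => Finset.sum_congr rfl fun t _ => by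
      rw [hT2 p c1 q q' s t]
  simp only [Mlem, hR]
  calc ∑ c1, ∑ t, T ((p,q),s) ((c1,q),t)
          * ∑ q', star (b q q') * x ((c1,q'),t)
      = ∑ c1, ∑ t, ∑ q', T ((p,q),s) ((c1,q),t) * (star (b q q') * x ((c1,q'),t)) := by
        refine Finset.sum_congr rfl fun c1 _ => Finset.sum_congr rfl fun t _ => ?_
        rw [Finset.mul_sum]
    _ = ∑ c1, ∑ q', ∑ t, T ((p,q),s) ((c1,q),t) * (star (b q q') * x ((c1,q'),t)) := by
        exact Finset.sum_congr rfl fun c1 _ => Finset.sum_comm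
    _ = ∑ q', ∑ c1, ∑ t, T ((p,q),s) ((c1,q),t) * (star (b q q') * x ((c1,q'),t)) :=
        Finset.sum_comm
    _ = ∑ q', star (b q q') * ∑ c1, ∑ t, T ((p,q),s) ((c1,q),t) * x ((c1,q'),t) := by
        refine Finset.sum_congr rfl fun q' _ => ?_
        rw [Finset.mul_sum]
        refine Finset.sum_congr rfl fun c1 _ => ?_
        rw [Finset.mul_sum]
        exact Finset.sum_congr rfl fun t _ => by ring

lemma part6 (N : ℕ) (a b : Matrix (Fin (N+1)) (Fin (N+1)) ℂ) (x : FuzzyIdx N → ℂ) :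
    (leftMulOp N a).mulVec (JtN N ((leftMulOp N b).mulVec (JtNInv N x))) =
      JtN N ((leftMulOp N b).mulVec (JtNInv N ((leftMulOp N a).mulVec x))) := by
  refine commT N (leftMulOp N a) ?_ ?_ b x
  · intro p q c1 c2 s t h
    simp [leftMulOp, h]
  · intro p c1 q q' s t
    simp [leftMulOp]

def lM {N : ℕ} (a : Matrix (Fin (N+1)) (Fin (N+1)) ℂ) :
    Matrix (Fin (N+1) × Fin (N+1)) (Fin (N+1) × Fin (N+1)) ℂ :=
  fun r c => a r.1 c.1 * (if r.2 = c.2 then 1 else 0)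

def rM {N : ℕ} (a : Matrix (Fin (N+1)) (Fin (N+1)) ℂ) :
    Matrix (Fin (N+1) × Fin (N+1)) (Fin (N+1) × Fin (N+1)) ℂ :=
  fun r c => (if r.1 = c.1 then 1 else 0) * a c.2 r.2

lemma adMat_eq {N : ℕ} (X : Matrix (Fin (N+1)) (Fin (N+1)) ℂ) :
    adMat X = lM X - rM X := rfl

lemma lM_mul {N : ℕ} (X Y : Matrix (Fin (N+1)) (Fin (N+1)) ℂ) :
    lM X * lM Y = lM (X * Y) := by
  ext r c
  simp only [Matrix.mul_apply, lM, Fintype.sum_prod_type, mul_ite, ite_mul, mul_one,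
    mul_zero, zero_mul, one_mul, Finset.sum_ite_irrel, Finset.sum_const_zero,
    Finset.sum_ite_eq, Finset.sum_ite_eq', Finset.mem_univ, if_true, Finset.sum_mul]

lemma rM_lM_comm {N : ℕ} (X Y : Matrix (Fin (N+1)) (Fin (N+1)) ℂ) :
    rM X * lM Y = lM Y * rM X := by
  ext r c
  simp only [Matrix.mul_apply, lM, rM, Fintype.sum_prod_type, mul_ite, ite_mul, mul_one,
    mul_zero, zero_mul, one_mul, Finset.sum_ite_irrel, Finset.sum_const_zero,
    Finset.sum_ite_eq, Finset.sum_ite_eq', Finset.mem_univ, if_true]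
  ring

lemma lM_sub {N : ℕ} (X Y : Matrix (Fin (N+1)) (Fin (N+1)) ℂ) :
    lM (X - Y) = lM X - lM Y := by
  ext r c
  simp only [lM, Matrix.sub_apply, sub_mul]

lemma sub_kron {N : ℕ} (A B : Matrix (Fin (N+1) × Fin (N+1)) (Fin (N+1) × Fin (N+1)) ℂ)
    (C : Matrix (Fin 2) (Fin 2) ℂ) : (A - B) ⊗ₖ C = A ⊗ₖ C - B ⊗ₖ C := by
  ext r c
  simp [Matrix.kroneckerMap_apply, sub_mul]

lemma leftMulOp_eq (N : ℕ) (a : Matrix (Fin (N+1)) (Fin (N+1)) ℂ) :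
    leftMulOp N a = lM a ⊗ₖ (1 : Matrix (Fin 2) (Fin 2) ℂ) := by
  ext r c
  simp only [leftMulOp, lM, Matrix.kroneckerMap_apply, Matrix.one_apply, ite_and]
  split_ifs <;> ring

lemma comm_eq (N : ℕ) (a : Matrix (Fin (N+1)) (Fin (N+1)) ℂ) :
    fullDirac N * leftMulOp N a - leftMulOp N a * fullDirac N
      = ∑ k : Fin 3, (lM (Jmat N k * a - a * Jmat N k)) ⊗ₖ pauli k := by
  rw [fullDirac, leftMulOp_eq, add_mul, mul_add, one_mul, mul_one,
    Finset.sum_mul, Finset.mul_sum, add_sub_add_left_eq_sub, ← Finset.sum_sub_distrib]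
  refine Finset.sum_congr rfl fun k _ => ?_
  rw [← Matrix.mul_kronecker_mul, ← Matrix.mul_kronecker_mul, one_mul, mul_one,
    ← sub_kron]
  have e : adMat (Jmat N k) * lM a - lM a * adMat (Jmat N k)
      = lM (Jmat N k * a - a * Jmat N k) := by
    rw [adMat_eq, lM_sub, sub_mul, mul_sub, rM_lM_comm, lM_mul, lM_mul]
    abel
  rw [e]

lemma part7 (N : ℕ) (a b : Matrix (Fin (N+1)) (Fin (N+1)) ℂ) (x : FuzzyIdx N → ℂ) :
    (fullDirac N * leftMulOp N a - leftMulOp N a * fullDirac N).mulVec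
        (JtN N ((leftMulOp N b).mulVec (JtNInv N x))) =
      JtN N ((leftMulOp N b).mulVec
        (JtNInv N ((fullDirac N * leftMulOp N a - leftMulOp N a * fullDirac N).mulVec x))) := by
  refine commT N _ ?_ ?_ b x
  · intro p q c1 c2 s t h
    rw [comm_eq]
    simp [Matrix.sum_apply, Matrix.kroneckerMap_apply, lM, h]
  · intro p c1 q q' s t
    rw [comm_eq]
    simp [Matrix.sum_apply, Matrix.kroneckerMap_apply, lM]

theorem fullDirac_real_structure (N : ℕ) (hN : 1 ≤ N) :
    -- `JtNInv` is indeed the inverse map of `J̃_N`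
    (∀ x, JtN N (JtNInv N x) = x) ∧ (∀ x, JtNInv N (JtN N x) = x) ∧
    -- (i) `J̃_N` is antiunitary
    (∀ x y, fuzzyInner N (JtN N x) (JtN N y) = star (fuzzyInner N x y)) ∧
    -- (ii) `J̃_N² = −1`
    (∀ x, JtN N (JtN N x) = -x) ∧
    -- (iii) `J̃_N D̃_N = D̃_N J̃_N`
    (∀ x, JtN N ((fullDirac N).mulVec x) = (fullDirac N).mulVec (JtN N x)) ∧
    -- (iv) `[L_a, J̃_N L_b J̃_N⁻¹] = 0` and `[[D̃_N, L_a], J̃_N L_b J̃_N⁻¹] = 0`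
    (∀ a b : Matrix (Fin (N + 1)) (Fin (N + 1)) ℂ, ∀ x,
      (leftMulOp N a).mulVec (JtN N ((leftMulOp N b).mulVec (JtNInv N x))) =
        JtN N ((leftMulOp N b).mulVec (JtNInv N ((leftMulOp N a).mulVec x)))) ∧
    (∀ a b : Matrix (Fin (N + 1)) (Fin (N + 1)) ℂ, ∀ x,
      (fullDirac N * leftMulOp N a - leftMulOp N a * fullDirac N).mulVec
          (JtN N ((leftMulOp N b).mulVec (JtNInv N x))) =
        JtN N ((leftMulOp N b).mulVec
          (JtNInv N ((fullDirac N * leftMulOp N a - leftMulOp N a * fullDirac N).mulVec x)))) := by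
  exact ⟨part1 N, part2 N, part3 N, part4 N, part5 N, part6 N, part7 N⟩
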